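/- If A = {a(1), ..., a(N)} where a : ℕ → ℝ is a lacunary sequence satisfying a(x+1)/a(x) ≥ c > 1 for all x ≥ 1 with a(1) > 0, then E(A) ≪ N^2, i.e., there is a constant C depending only on c such that E(A) ≤ C N^2. -/

import Mathlib

open scoped Pointwise

/-- The additive energy of a finite set `A ⊆ ℝ`. -/
noncomputable def addEnergy (A : Finset ℝ) : ℕ :=
  ((A ×ˢ A ×ˢ A ×ˢ A).filter fun p => p.1 + p.2.1 = p.2.2.1 + p.2.2.2).card

lemma addEnergy_eq (A : Finset ℝ) : addEnergy A = Finset.addEnergy A A := by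
  rw [addEnergy, Finset.addEnergy_eq_card_filter]
  apply Finset.card_equiv ⟨fun p => ((p.1, p.2.1), (p.2.2.1, p.2.2.2)),
    fun p => (p.1.1, p.1.2, p.2.1, p.2.2), fun p => rfl, fun p => rfl⟩
  intro p
  simp only [Finset.mem_filter, Finset.mem_product]
  tauto

section aux
variable {c : ℝ} (hc : 1 < c) {a : ℕ → ℝ}
  (h1 : 0 < a 1) (hg : ∀ x : ℕ, 1 ≤ x → c * a x ≤ a (x + 1))

include hc h1 hg

lemma a_pos : ∀ x : ℕ, 1 ≤ x → 0 < a x := by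
  intro x hx
  induction x with
  | zero => omega
  | succ n ih =>
    rcases Nat.eq_or_lt_of_le hx with h | h
    · simpa [← h] using h1
    · have hn : 1 ≤ n := by omega
      have := hg n hn
      have := ih hn
      nlinarith

lemma a_grow : ∀ x n : ℕ, 1 ≤ x → c ^ n * a x ≤ a (x + n) := by
  intro x n hx
  induction n with
  | zero => simp
  | succ n ih =>
    have h2 := hg (x + n) (by omega)
    calc c ^ (n + 1) * a x = c * (c ^ n * a x) := by ring
    _ ≤ c * a (x + n) := by
        apply mul_le_mul_of_nonneg_left ih (by linarith)
    _ ≤ a (x + n + 1) := h2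

/-- number of indices with a x in [v/2, v] is at most K where 2 < c^K -/
lemma count_window {K N : ℕ} (hK : (2:ℝ) < c ^ K) (v : ℝ) :
    ((Finset.Icc 1 N).filter fun x => v / 2 ≤ a x ∧ a x ≤ v).card ≤ K := by
  set S := (Finset.Icc 1 N).filter fun x => v / 2 ≤ a x ∧ a x ≤ v with hS
  rcases S.eq_empty_or_nonempty with h | h
  · simp [h]
  · set m := S.min' h with hmdef
    have hm : m ∈ S := S.min'_mem h
    have hmem := hm
    simp only [hS, Finset.mem_filter, Finset.mem_Icc] at hmem
    obtain ⟨⟨hm1, _⟩, hmv2, hmv⟩ := hmem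
    have hmpos : 0 < a m := a_pos hc h1 hg m hm1
    have hv : 0 < v := lt_of_lt_of_le hmpos hmv
    have hsub : S ⊆ Finset.Icc m (m + (K - 1)) := by
      intro x hx
      have hxm := hx
      simp only [hS, Finset.mem_filter, Finset.mem_Icc] at hxm
      obtain ⟨⟨hx1, _⟩, hxv2, hxv⟩ := hxm
      simp only [Finset.mem_Icc]
      constructor
      · exact S.min'_le x hx
      · by_contra hcon
        push_neg at hcon
        have hxK : m + K ≤ x := by omega
        have := a_grow hc h1 hg m (x - m) hm1
        rw [Nat.add_sub_cancel' (by omega)] at this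
        have hpow : c ^ K ≤ c ^ (x - m) := pow_le_pow_right₀ (le_of_lt hc) (by omega)
        nlinarith
    calc S.card ≤ (Finset.Icc m (m + (K - 1))).card := Finset.card_le_card hsub
    _ = K - 1 + 1 := by rw [Nat.card_Icc]; omega
    _ ≤ K := by
        have : 1 ≤ K := by
          by_contra hK0
          have : K = 0 := by omega
          simp [this] at hK
        omega
end aux

section main
variable {c : ℝ} (hc : 1 < c) {a : ℕ → ℝ} {N : ℕ}
  (h1 : 0 < a 1) (hg : ∀ x : ℕ, 1 ≤ x → c * a x ≤ a (x + 1))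

include hc h1 hg

lemma rep_bound {K : ℕ} (hK : (2:ℝ) < c ^ K) (v : ℝ) :
    (((Finset.Icc 1 N).image a ×ˢ (Finset.Icc 1 N).image a).filter
      fun p => p.1 + p.2 = v).card ≤ 2 * K := by
  set A := (Finset.Icc 1 N).image a with hA
  have hApos : ∀ y ∈ A, 0 < y := by
    intro y hy
    simp only [hA, Finset.mem_image, Finset.mem_Icc] at hy
    obtain ⟨x, ⟨hx1, _⟩, rfl⟩ := hy
    exact a_pos hc h1 hg x hx1
  set T := A.filter (fun m => v / 2 ≤ m ∧ m ≤ v) with hT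
  have hTcard : T.card ≤ K := by
    have hsub : T ⊆ ((Finset.Icc 1 N).filter fun x => v / 2 ≤ a x ∧ a x ≤ v).image a := by
      intro t ht
      simp only [hT, hA, Finset.mem_filter, Finset.mem_image] at ht ⊢
      obtain ⟨⟨x, hx, rfl⟩, h2, h3⟩ := ht
      exact ⟨x, ⟨hx, h2, h3⟩, rfl⟩
    calc T.card ≤ _ := Finset.card_le_card hsub
    _ ≤ _ := Finset.card_image_le
    _ ≤ K := count_window hc h1 hg hK v
  calc (((A ×ˢ A).filter fun p => p.1 + p.2 = v).card)
      ≤ 2 * T.card := by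
        apply Finset.card_le_mul_card_image_of_maps_to
          (f := fun p : ℝ × ℝ => max p.1 p.2)
        · intro p hp
          simp only [Finset.mem_filter, Finset.mem_product] at hp
          obtain ⟨⟨hp1, hp2⟩, hpv⟩ := hp
          have h01 := hApos _ hp1
          have h02 := hApos _ hp2
          simp only [hT, Finset.mem_filter]
          refine ⟨?_, ?_, ?_⟩
          · rcases max_choice p.1 p.2 with h | h <;> rw [h] <;> assumption
          · rcases le_total p.1 p.2 with h | h
            · rw [max_eq_right h]; linarith
            · rw [max_eq_left h]; linarith
          · rcases le_total p.1 p.2 with h | h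
            · rw [max_eq_right h]; linarith
            · rw [max_eq_left h]; linarith
        · intro b hb
          have hsub2 : (((A ×ˢ A).filter fun p => p.1 + p.2 = v).filter
              fun p => max p.1 p.2 = b) ⊆ {(b, v - b), (v - b, b)} := by
            intro p hp
            simp only [Finset.mem_filter] at hp
            obtain ⟨⟨_, hpv⟩, hmax⟩ := hp
            simp only [Finset.mem_insert, Finset.mem_singleton]
            rcases max_choice p.1 p.2 with h | h
            · left; rw [h] at hmax
              have h2 : p.2 = v - b := by rw [← hmax]; linarith
              exact Prod.ext_iff.mpr ⟨hmax, h2⟩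
            · right; rw [h] at hmax
              have h2 : p.1 = v - b := by rw [← hmax]; linarith
              exact Prod.ext_iff.mpr ⟨h2, hmax⟩
          calc _ ≤ ({(b, v - b), (v - b, b)} : Finset (ℝ × ℝ)).card :=
                Finset.card_le_card hsub2
          _ ≤ 2 := Finset.card_insert_le _ _ |>.trans (by simp)
    _ ≤ 2 * K := by omega

end main

theorem lacunary_energy_bound (c : ℝ) (hc : 1 < c) :
    ∃ C : ℝ, 0 < C ∧ ∀ (a : ℕ → ℝ) (N : ℕ),
      0 < a 1 →
      (∀ x : ℕ, 1 ≤ x → c * a x ≤ a (x + 1)) →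
      (addEnergy ((Finset.Icc 1 N).image a) : ℝ) ≤ C * (N : ℝ) ^ 2 := by
  obtain ⟨K, hK⟩ := pow_unbounded_of_one_lt (2 : ℝ) hc
  refine ⟨2 * K + 1, by positivity, fun a N h1 hg => ?_⟩
  set A := (Finset.Icc 1 N).image a with hA
  have key : addEnergy A ≤ 2 * K * N ^ 2 := by
    rw [addEnergy_eq, Finset.addEnergy_eq_sum_sq']
    have hstep : ∀ v ∈ A + A,
        ((A ×ˢ A).filter fun p : ℝ × ℝ => p.1 + p.2 = v).card ^ 2 ≤
        2 * K * ((A ×ˢ A).filter fun p : ℝ × ℝ => p.1 + p.2 = v).card := by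
      intro v _
      have := rep_bound (N := N) hc h1 hg hK v
      nlinarith
    calc (∑ v ∈ A + A, ((A ×ˢ A).filter fun p : ℝ × ℝ => p.1 + p.2 = v).card ^ 2)
        ≤ ∑ v ∈ A + A, 2 * K * ((A ×ˢ A).filter fun p : ℝ × ℝ => p.1 + p.2 = v).card :=
          Finset.sum_le_sum hstep
      _ = 2 * K * ∑ v ∈ A + A, ((A ×ˢ A).filter fun p : ℝ × ℝ => p.1 + p.2 = v).card := by
          rw [Finset.mul_sum]
      _ = 2 * K * (A ×ˢ A).card := by
          rw [← Finset.card_eq_sum_card_fiberwise (f := fun p : ℝ × ℝ => p.1 + p.2)]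
          intro p hp
          rw [Finset.mem_coe, Finset.mem_product] at hp
          exact Finset.add_mem_add hp.1 hp.2
      _ ≤ 2 * K * N ^ 2 := by
          rw [Finset.card_product]
          have : A.card ≤ N := by
            calc A.card ≤ (Finset.Icc 1 N).card := Finset.card_image_le
            _ = N := by rw [Nat.card_Icc]; omega
          have := Nat.mul_le_mul this this
          nlinarith
  calc (addEnergy A : ℝ) ≤ ((2 * K * N ^ 2 : ℕ) : ℝ) := by exact_mod_cast key
    _ ≤ (2 * K + 1) * N ^ 2 := by push_cast; nlinarith [sq_nonneg (N:ℝ)]
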